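/- arXiv:1207.0252 — 4 statements merged into one kernel-verified Lean document; each statement's English description precedes it below -/
import Mathlib

section
/- Let k ≥ 1 be an integer and p ∈ (0,1] a real number. For any n ∈ ℕ and any input assignment x : Fin n → Bool, let s = |{v : x v = true}| and consider the product Π = ∏_{v : Fin n} (if x v then p^(1/k) else 1). Then: (i) if s ≤ k, then Π ≥ p; and (ii) if s ≥ k+1, then Π ≤ p^(1+1/k) (equivalently, 1 − Π ≥ 1 − p^(1+1/k)). -/
open Finset

theorem amos_k_zero_round_decider
    (k : ℕ) (hk : 1 ≤ k) (p : ℝ) (hp : 0 < p) (hp1 : p ≤ 1)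
    (n : ℕ) (x : Fin n → Bool) :
    ((Finset.univ.filter (fun v : Fin n => x v = true)).card ≤ k →
      p ≤ ∏ v : Fin n, (if x v then p ^ ((1 : ℝ) / (k : ℝ)) else 1)) ∧
    (k + 1 ≤ (Finset.univ.filter (fun v : Fin n => x v = true)).card →
      ∏ v : Fin n, (if x v then p ^ ((1 : ℝ) / (k : ℝ)) else 1)
        ≤ p ^ (1 + (1 : ℝ) / (k : ℝ))) := by
  have hk0 : (0 : ℝ) < (k : ℝ) := by exact_mod_cast hk
  set s := (Finset.univ.filter (fun v : Fin n => x v = true)).card with hs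
  have hprod : (∏ v : Fin n, (if x v then p ^ ((1 : ℝ) / (k : ℝ)) else 1))
      = p ^ ((s : ℝ) / (k : ℝ)) := by
    have h1 : (∏ v : Fin n, (if x v then p ^ ((1 : ℝ) / (k : ℝ)) else 1))
        = ∏ v ∈ Finset.univ.filter (fun v : Fin n => x v = true),
            p ^ ((1 : ℝ) / (k : ℝ)) := by
      rw [Finset.prod_filter]
    rw [h1, Finset.prod_const, ← hs, ← Real.rpow_natCast (p ^ ((1:ℝ)/(k:ℝ))) s,
      ← Real.rpow_mul hp.le, one_div_mul_eq_div]
  rw [hprod]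
  constructor
  · intro h
    have : (s : ℝ) / (k : ℝ) ≤ 1 := by
      rw [div_le_one hk0]; exact_mod_cast h
    calc p = p ^ (1 : ℝ) := (Real.rpow_one p).symm
      _ ≤ p ^ ((s : ℝ) / (k : ℝ)) := Real.rpow_le_rpow_of_exponent_ge hp hp1 this
  · intro h
    apply Real.rpow_le_rpow_of_exponent_ge hp hp1
    rw [le_div_iff₀ hk0]
    have : ((k : ℝ) + 1) ≤ (s : ℝ) := by exact_mod_cast h
    calc (1 + 1 / (k:ℝ)) * k = k + 1 := by field_simp
      _ ≤ s := this
end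

section
/- Let k ≥ 1 be an integer, let p ∈ (0,1) and ε > 0 be reals, and let δ be a real with 0 < δ < p^(1+1/k)·(1 − p^ε)/k. Let p_1, …, p_{k+1} ∈ (0,1] and let j be an index with p_j = max_i p_i. Let Y and Y' be reals with p ≤ Y ≤ ∏_{i ≠ j} p_i, Y' ≥ 0, and Y' ≥ (∏_{i=1}^{k+1} p_i) − k·δ. Then Y' > p^(1/k + ε) · Y. -/
open Finset

theorem amos_k_lower_bound_skeleton
    (k : ℕ) (hk : 1 ≤ k) (p ε : ℝ) (hp : 0 < p) (hp1 : p < 1) (hε : 0 < ε)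
    (δ : ℝ) (hδ0 : 0 < δ)
    (hδ : δ < p ^ (1 + (1 : ℝ) / (k : ℝ)) * (1 - p ^ ε) / (k : ℝ))
    (f : Fin (k + 1) → ℝ) (hf0 : ∀ i, 0 < f i) (hf1 : ∀ i, f i ≤ 1)
    (j : Fin (k + 1)) (hj : ∀ i, f i ≤ f j)
    (Y Y' : ℝ) (hYlo : p ≤ Y) (hYhi : Y ≤ ∏ i ∈ Finset.univ.erase j, f i)
    (hY'0 : 0 ≤ Y') (hY' : (∏ i : Fin (k + 1), f i) - (k : ℝ) * δ ≤ Y') :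
    Y' > p ^ ((1 : ℝ) / (k : ℝ) + ε) * Y := by
  have hk' : (0:ℝ) < (k:ℝ) := by exact_mod_cast hk.trans_lt' Nat.zero_lt_one
  set P : ℝ := ∏ i ∈ Finset.univ.erase j, f i with hPdef
  have hP0 : 0 < P := Finset.prod_pos (fun i _ => hf0 i)
  have hY0 : 0 < Y := hp.trans_le hYlo
  have hcard : (Finset.univ.erase j).card = k := by
    simp [Finset.card_erase_of_mem (Finset.mem_univ j)]
  -- P ≤ f j ^ k
  have hPle : P ≤ f j ^ k := by
    calc P ≤ ∏ _i ∈ Finset.univ.erase j, f j :=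
          Finset.prod_le_prod (fun i _ => (hf0 i).le) (fun i _ => hj i)
      _ = f j ^ k := by rw [Finset.prod_const, hcard]
  have hfj0 : 0 < f j := hf0 j
  have hik : (0:ℝ) ≤ 1 / (k:ℝ) := by positivity
  have hfjP : P ^ ((1:ℝ)/(k:ℝ)) ≤ f j := by
    have := Real.rpow_le_rpow hP0.le hPle hik
    calc P ^ ((1:ℝ)/(k:ℝ)) ≤ (f j ^ k) ^ ((1:ℝ)/(k:ℝ)) := this
      _ = f j := by
          rw [← Real.rpow_natCast (f j) k, ← Real.rpow_mul hfj0.le]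
          rw [mul_one_div, div_self hk'.ne', Real.rpow_one]
  have hprod : (∏ i : Fin (k + 1), f i) = f j * P :=
    (Finset.mul_prod_erase Finset.univ f (Finset.mem_univ j)).symm
  have hprodge : P ^ (1 + (1:ℝ)/(k:ℝ)) ≤ ∏ i : Fin (k + 1), f i := by
    rw [hprod, Real.rpow_add hP0, Real.rpow_one, mul_comm P]
    exact mul_le_mul_of_nonneg_right hfjP hP0.le
  have hYPle : Y ^ (1 + (1:ℝ)/(k:ℝ)) ≤ P ^ (1 + (1:ℝ)/(k:ℝ)) :=
    Real.rpow_le_rpow hY0.le hYhi (by positivity)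
  have hYsplit : Y ^ (1 + (1:ℝ)/(k:ℝ)) = Y * Y ^ ((1:ℝ)/(k:ℝ)) := by
    rw [Real.rpow_add hY0, Real.rpow_one]
  have hYk : p ^ ((1:ℝ)/(k:ℝ)) ≤ Y ^ ((1:ℝ)/(k:ℝ)) :=
    Real.rpow_le_rpow hp.le hYlo hik
  have hpε1 : p ^ ε < 1 := Real.rpow_lt_one hp.le hp1 hε
  have hpsplit : p ^ ((1:ℝ)/(k:ℝ) + ε) = p ^ ((1:ℝ)/(k:ℝ)) * p ^ ε := Real.rpow_add hp _ _
  have hpsplit2 : p ^ (1 + (1:ℝ)/(k:ℝ)) = p * p ^ ((1:ℝ)/(k:ℝ)) := by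
    rw [Real.rpow_add hp, Real.rpow_one]
  have hpk0 : 0 < p ^ ((1:ℝ)/(k:ℝ)) := Real.rpow_pos_of_pos hp _
  -- key : p^(1+1/k)*(1-p^ε) ≤ Y*(Y^(1/k) - p^(1/k)*p^ε)
  have key : p ^ (1 + (1:ℝ)/(k:ℝ)) * (1 - p ^ ε)
      ≤ Y * (Y ^ ((1:ℝ)/(k:ℝ)) - p ^ ((1:ℝ)/(k:ℝ)) * p ^ ε) := by
    rw [hpsplit2, mul_assoc]
    apply mul_le_mul hYlo _ (by nlinarith) hY0.le
    nlinarith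
  have hkδ : (k:ℝ) * δ < p ^ (1 + (1:ℝ)/(k:ℝ)) * (1 - p ^ ε) := by
    rw [lt_div_iff₀ hk'] at hδ; linarith
  nlinarith [hprodge, hYPle, hYsplit, hY', key, hkδ, hpsplit]
end

section
/- Let a, b ≥ 1 be integers, let p ∈ (0,1) and ε > 0 be reals, and let δ be a real with 0 < δ < p^(1+b/a)·(1 − p^ε)/(a+b−1). Let p_1, …, p_{a+b} ∈ (0,1] and let J be a set of b indices with |J| = b and p_j ≥ p_i for every j ∈ J and i ∉ J. Let Y and Y' be reals with p ≤ Y ≤ ∏_{i ∉ J} p_i, Y' ≥ 0, and Y' ≥ (∏_{i=1}^{a+b} p_i) − (a+b−1)·δ. Then Y' > p^(b/a + ε) · Y. -/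
open Finset

theorem amos_a_promise_lower_bound_skeleton
    (a b : ℕ) (ha : 1 ≤ a) (hb : 1 ≤ b) (p ε : ℝ) (hp : 0 < p) (hp1 : p < 1)
    (hε : 0 < ε) (δ : ℝ) (hδ0 : 0 < δ)
    (hδ : δ < p ^ (1 + (b : ℝ) / (a : ℝ)) * (1 - p ^ ε) / ((a : ℝ) + (b : ℝ) - 1))
    (f : Fin (a + b) → ℝ) (hf0 : ∀ i, 0 < f i) (hf1 : ∀ i, f i ≤ 1)
    (J : Finset (Fin (a + b))) (hJcard : J.card = b)
    (hJmax : ∀ j ∈ J, ∀ i ∉ J, f i ≤ f j)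
    (Y Y' : ℝ) (hYlo : p ≤ Y) (hYhi : Y ≤ ∏ i ∈ Jᶜ, f i)
    (hY'0 : 0 ≤ Y')
    (hY' : (∏ i : Fin (a + b), f i) - ((a : ℝ) + (b : ℝ) - 1) * δ ≤ Y') :
    Y' > p ^ ((b : ℝ) / (a : ℝ) + ε) * Y := by
  have ha0 : (0:ℝ) < (a:ℝ) := by exact_mod_cast ha
  have hane : (a:ℝ) ≠ 0 := ne_of_gt ha0
  have hab1 : (0:ℝ) < (a:ℝ) + (b:ℝ) - 1 := by
    have : (1:ℝ) ≤ (b:ℝ) := by exact_mod_cast hb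
    linarith
  set Q : ℝ := ∏ i ∈ Jᶜ, f i with hQdef
  have hQpos : 0 < Q := Finset.prod_pos (fun i _ => hf0 i)
  have hJcc : Jᶜ.card = a := by
    have := Finset.card_compl J
    simp [hJcard, Fintype.card_fin] at this
    omega
  -- each j in J satisfies Q ≤ f j ^ a
  have hkey : ∀ j ∈ J, Q ^ ((1:ℝ)/(a:ℝ)) ≤ f j := by
    intro j hj
    have h1 : Q ≤ f j ^ (a:ℕ) := by
      calc Q ≤ ∏ _i ∈ Jᶜ, f j := by
              exact Finset.prod_le_prod (fun i _ => (hf0 i).le)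
                (fun i hi => hJmax j hj i (Finset.mem_compl.mp hi))
        _ = f j ^ (a:ℕ) := by rw [Finset.prod_const, hJcc]
    have h2 : Q ^ ((1:ℝ)/(a:ℝ)) ≤ (f j ^ (a:ℕ)) ^ ((1:ℝ)/(a:ℝ)) :=
      Real.rpow_le_rpow hQpos.le h1 (by positivity)
    calc Q ^ ((1:ℝ)/(a:ℝ)) ≤ (f j ^ (a:ℕ)) ^ ((1:ℝ)/(a:ℝ)) := h2
      _ = f j := by
          rw [← Real.rpow_natCast (f j) a, ← Real.rpow_mul (hf0 j).le]
          rw [mul_one_div, div_self hane, Real.rpow_one]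
  have hPJ : Q ^ ((b:ℝ)/(a:ℝ)) ≤ ∏ j ∈ J, f j := by
    calc Q ^ ((b:ℝ)/(a:ℝ)) = (Q ^ ((1:ℝ)/(a:ℝ))) ^ (b:ℕ) := by
          rw [← Real.rpow_natCast (Q ^ ((1:ℝ)/(a:ℝ))) b, ← Real.rpow_mul hQpos.le]
          ring_nf
      _ = ∏ _j ∈ J, Q ^ ((1:ℝ)/(a:ℝ)) := by rw [Finset.prod_const, hJcard]
      _ ≤ ∏ j ∈ J, f j := Finset.prod_le_prod (fun _ _ => by positivity)
          (fun j hj => hkey j hj)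
  have hpQ : p ^ ((b:ℝ)/(a:ℝ)) ≤ Q ^ ((b:ℝ)/(a:ℝ)) :=
    Real.rpow_le_rpow hp.le (le_trans hYlo hYhi) (by positivity)
  have hprod : Y * p ^ ((b:ℝ)/(a:ℝ)) ≤ ∏ i : Fin (a+b), f i := by
    have hsplit : (∏ i : Fin (a+b), f i) = Q * ∏ j ∈ J, f j := by
      rw [hQdef, Finset.prod_compl_mul_prod J f]
    rw [hsplit]
    have hYpos : 0 < Y := lt_of_lt_of_le hp hYlo
    calc Y * p ^ ((b:ℝ)/(a:ℝ)) ≤ Q * (Q ^ ((b:ℝ)/(a:ℝ))) := by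
          apply mul_le_mul hYhi (le_trans hpQ le_rfl) (by positivity) hQpos.le
      _ ≤ Q * ∏ j ∈ J, f j := by
          exact mul_le_mul_of_nonneg_left hPJ hQpos.le
  have hδ' : ((a:ℝ)+(b:ℝ)-1) * δ < p ^ (1 + (b:ℝ)/(a:ℝ)) * (1 - p ^ ε) := by
    rw [mul_comm]
    exact (lt_div_iff₀ hab1).mp hδ
  have heps : p ^ ε < 1 := Real.rpow_lt_one hp.le hp1 hε
  have h1 : p ^ (1 + (b:ℝ)/(a:ℝ)) = p * p ^ ((b:ℝ)/(a:ℝ)) := by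
    rw [Real.rpow_add hp, Real.rpow_one]
  have h2 : p ^ ((b:ℝ)/(a:ℝ) + ε) = p ^ ((b:ℝ)/(a:ℝ)) * p ^ ε := by
    rw [Real.rpow_add hp]
  have hba : (0:ℝ) < p ^ ((b:ℝ)/(a:ℝ)) := Real.rpow_pos_of_pos hp _
  have : Y' > Y * p ^ ((b:ℝ)/(a:ℝ)) - p ^ (1 + (b:ℝ)/(a:ℝ)) * (1 - p ^ ε) := by
    linarith
  rw [h1] at this
  rw [h2]
  nlinarith [mul_nonneg (mul_nonneg hba.le (sub_nonneg.mpr heps.le)) (sub_nonneg.mpr hYlo)]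
end

section
/- Let a, b ≥ 1 be integers and p ∈ (0,1] a real number. For any n ∈ ℕ and any input assignment x : Fin n → Bool, let s = |{v : x v = true}| and consider the product Π = ∏_{v : Fin n} (if x v then p^(1/a) else 1). Then: (i) if s ≤ a, then Π ≥ p; and (ii) if s ≥ a + b, then Π ≤ p^(1 + b/a). -/
open Finset

theorem amos_a_promise_zero_round_decider
    (a b : ℕ) (ha : 1 ≤ a) (hb : 1 ≤ b) (p : ℝ) (hp : 0 < p) (hp1 : p ≤ 1)
    (n : ℕ) (x : Fin n → Bool) :
    ((Finset.univ.filter (fun v : Fin n => x v = true)).card ≤ a →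
      p ≤ ∏ v : Fin n, (if x v then p ^ ((1 : ℝ) / (a : ℝ)) else 1)) ∧
    (a + b ≤ (Finset.univ.filter (fun v : Fin n => x v = true)).card →
      ∏ v : Fin n, (if x v then p ^ ((1 : ℝ) / (a : ℝ)) else 1)
        ≤ p ^ (1 + (b : ℝ) / (a : ℝ))) := by
  set s := (Finset.univ.filter (fun v : Fin n => x v = true)).card with hs
  have ha0 : (0:ℝ) < (a:ℝ) := by exact_mod_cast ha
  have key : (∏ v : Fin n, (if x v then p ^ ((1 : ℝ) / (a : ℝ)) else 1))
      = p ^ ((s : ℝ) / (a : ℝ)) := by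
    rw [← Finset.prod_filter, Finset.prod_const]
    rw [hs, ← Real.rpow_natCast (p ^ ((1:ℝ)/(a:ℝ))), ← Real.rpow_mul hp.le]
    congr 1
    field_simp
  rw [key]
  constructor
  · intro h
    have : (s : ℝ) / (a : ℝ) ≤ 1 := by
      rw [div_le_one ha0]; exact_mod_cast h
    calc p = p ^ (1:ℝ) := (Real.rpow_one p).symm
      _ ≤ p ^ ((s:ℝ)/(a:ℝ)) := Real.rpow_le_rpow_of_exponent_ge hp hp1 this
  · intro h
    apply Real.rpow_le_rpow_of_exponent_ge hp hp1
    rw [add_div' _ _ _ (ne_of_gt ha0), div_le_div_iff₀ ha0 ha0]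
    have : (a:ℝ) + b ≤ (s:ℝ) := by exact_mod_cast h
    nlinarith
end
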